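/- For a signed P3109 format f, if a and b are finite values of f with exponent(a) ≥ exponent(b), |a+b| > M_hi, and s = sign(a+b) · M_hi (saturated sum), then both s − a and a + b − s are exactly representable in f. -/

import Mathlib

/-- Finite value set of a signed P3109 format with precision `P` and
exponent range `emin ≤ emax`. -/
def Vf (P : ℕ) (emin emax : ℤ) : Set ℝ :=
  { x | ∃ m e : ℤ, |m| < 2 ^ P ∧ emin ≤ e ∧ e ≤ emax ∧
      x = (m : ℝ) * (2 : ℝ) ^ (e - (P : ℤ) + 1) }

/-- Largest finite magnitude. -/
noncomputable def Mhi (P : ℕ) (emax : ℤ) : ℝ :=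
  ((2 : ℝ) ^ P - 1) * (2 : ℝ) ^ (emax - (P : ℤ) + 1)

/-- Canonical exponent: `max (⌊log₂ |x|⌋) emin` for `x ≠ 0`, `emin` for `x = 0`. -/
noncomputable def expo (emin : ℤ) (x : ℝ) : ℤ :=
  if x = 0 then emin else max (Int.log 2 |x|) emin

/-- `s` is a faithful rounding of `r` in `V`: it is `r` itself if `r ∈ V`,
and otherwise a floating-point neighbor (predecessor or successor) of `r`. -/
def Faithful (V : Set ℝ) (r s : ℝ) : Prop :=
  s ∈ V ∧ (r ∈ V → s = r) ∧
    ((s ≤ r ∧ ∀ v ∈ V, v ≤ r → v ≤ s) ∨ (r ≤ s ∧ ∀ v ∈ V, r ≤ v → s ≤ v))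

/-- `s` is a round-to-nearest value of `r` in `V` (arbitrary tie-breaking). -/
def Nearest (V : Set ℝ) (r s : ℝ) : Prop :=
  s ∈ V ∧ ∀ v ∈ V, |s - r| ≤ |v - r|

lemma two_zpow_split (P : ℕ) (e : ℤ) : (2:ℝ) ^ (e + 1) = 2 ^ P * 2 ^ (e - (P:ℤ) + 1) := by
  rw [← zpow_natCast (2:ℝ) P, ← zpow_add₀ two_ne_zero]
  congr 1
  ring

lemma emin_le_expo (emin : ℤ) (x : ℝ) : emin ≤ expo emin x := by
  unfold expo; split <;> simp

lemma expo_neg (emin : ℤ) (x : ℝ) : expo emin (-x) = expo emin x := by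
  simp [expo, neg_eq_zero, abs_neg]

lemma abs_lt_two_pow (emin : ℤ) (x : ℝ) : |x| < 2 ^ (expo emin x + 1) := by
  unfold expo
  split
  · simp [*]
    positivity
  · have h2 : |x| < (2:ℝ) ^ (Int.log 2 |x| + 1) := by
      have := Int.lt_zpow_succ_log_self (b := 2) (by norm_num) |x|
      simpa using this
    refine h2.trans_le ?_
    gcongr
    · norm_num
    · exact le_max_left _ _

lemma Vf_neg {P emin emax} {x : ℝ} (h : x ∈ Vf P emin emax) : -x ∈ Vf P emin emax := by
  obtain ⟨m, e, hm, h1, h2, rfl⟩ := h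
  exact ⟨-m, e, by simpa using hm, h1, h2, by push_cast; ring⟩

lemma abs_le_Mhi {P emin emax} {x : ℝ} (h : x ∈ Vf P emin emax) : |x| ≤ Mhi P emax := by
  obtain ⟨m, e, hm, h1, h2, rfl⟩ := h
  have hm' : (|m| : ℝ) ≤ 2 ^ P - 1 := by
    have : |m| ≤ 2 ^ P - 1 := by omega
    calc (|m| : ℝ) ≤ ((2 ^ P - 1 : ℤ) : ℝ) := by exact_mod_cast this
    _ = 2 ^ P - 1 := by push_cast; ring
  rw [abs_mul, abs_of_pos (zpow_pos (by norm_num : (0:ℝ) < 2) _)]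
  push_cast
  unfold Mhi
  calc |(m:ℝ)| * 2 ^ (e - (P:ℤ) + 1) ≤ (2 ^ P - 1) * 2 ^ (e - (P:ℤ) + 1) := by
        apply mul_le_mul_of_nonneg_right hm' (le_of_lt (zpow_pos (by norm_num) _))
    _ ≤ (2 ^ P - 1) * 2 ^ (emax - (P:ℤ) + 1) := by
        apply mul_le_mul_of_nonneg_left _ ?_
        · exact zpow_le_zpow_right₀ (by norm_num) (by omega)
        · have : (1:ℝ) ≤ 2 ^ P := one_le_pow₀ (by norm_num)
          linarith

lemma Mhi_pos {P : ℕ} (hP : 1 ≤ P) (emax : ℤ) : 0 < Mhi P emax := by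
  unfold Mhi
  apply mul_pos _ (zpow_pos (by norm_num) _)
  have : (2:ℝ) ^ 1 ≤ 2 ^ P := pow_le_pow_right₀ (by norm_num) hP
  norm_num at this ⊢
  linarith

lemma Mhi_lt {P : ℕ} (emax : ℤ) : Mhi P emax < 2 ^ (emax + 1) := by
  unfold Mhi
  have h1 : (0:ℝ) < 2 ^ (emax - (P:ℤ) + 1) := zpow_pos (by norm_num) _
  have : ((2:ℝ) ^ P - 1) * 2 ^ (emax - (P:ℤ) + 1) < 2 ^ P * 2 ^ (emax - (P:ℤ) + 1) := by
    apply mul_lt_mul_of_pos_right (by linarith) h1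
  calc ((2:ℝ) ^ P - 1) * 2 ^ (emax - (P:ℤ) + 1) < 2 ^ P * 2 ^ (emax - (P:ℤ) + 1) := this
    _ = 2 ^ (emax + 1) := (two_zpow_split P emax).symm

lemma expo_le_of_abs_lt {emin e : ℤ} {x : ℝ} (hx : |x| < 2 ^ (e + 1)) (he : emin ≤ e) :
    expo emin x ≤ e := by
  unfold expo
  split
  · exact he
  · have h0 : 0 < |x| := abs_pos.2 ‹x ≠ 0›
    have : Int.log 2 |x| < e + 1 := by
      rw [← Int.lt_zpow_iff_log_lt (by norm_num) h0]
      simpa using hx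
    omega

lemma expo_le_emax {P emin emax} (hP : 1 ≤ P) (he : emin ≤ emax) {x : ℝ}
    (h : x ∈ Vf P emin emax) : expo emin x ≤ emax :=
  expo_le_of_abs_lt ((abs_le_Mhi h).trans_lt (Mhi_lt emax)) he

lemma exists_int_mul {P emin emax} (hP : 1 ≤ P) {x : ℝ} (h : x ∈ Vf P emin emax) :
    ∃ k : ℤ, x = (k : ℝ) * 2 ^ (expo emin x - (P:ℤ) + 1) := by
  obtain ⟨m, e, hm, h1, h2, rfl⟩ := h
  set x := (m : ℝ) * (2 : ℝ) ^ (e - (P:ℤ) + 1) with hxdef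
  have hE : expo emin x ≤ e := by
    apply expo_le_of_abs_lt _ h1
    rw [hxdef, abs_mul, abs_of_pos (zpow_pos (by norm_num : (0:ℝ) < 2) _)]
    have hm' : (|m| : ℝ) < 2 ^ P := by exact_mod_cast hm
    push_cast
    calc |(m:ℝ)| * 2 ^ (e - (P:ℤ) + 1) < 2 ^ P * 2 ^ (e - (P:ℤ) + 1) := by
          apply mul_lt_mul_of_pos_right hm' (zpow_pos (by norm_num) _)
      _ = 2 ^ (e + 1) := (two_zpow_split P e).symm
  refine ⟨m * 2 ^ (e - expo emin x).toNat, ?_⟩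
  push_cast
  rw [← zpow_natCast (2:ℝ) (e - expo emin x).toNat, Int.toNat_of_nonneg (by omega),
    mul_assoc, ← zpow_add₀ two_ne_zero]
  nth_rewrite 1 [hxdef]
  congr 2
  ring

lemma mem_Vf_of {P : ℕ} {emin emax e : ℤ} {x : ℝ} (k : ℤ)
    (hx : x = (k : ℝ) * 2 ^ (e - (P:ℤ) + 1)) (habs : |x| < 2 ^ (e + 1))
    (h1 : emin ≤ e) (h2 : e ≤ emax) : x ∈ Vf P emin emax := by
  refine ⟨k, e, ?_, h1, h2, hx⟩
  have hg : (0:ℝ) < 2 ^ (e - (P:ℤ) + 1) := zpow_pos (by norm_num) _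
  have : (|k| : ℝ) * 2 ^ (e - (P:ℤ) + 1) < 2 ^ P * 2 ^ (e - (P:ℤ) + 1) := by
    calc (|k| : ℝ) * 2 ^ (e - (P:ℤ) + 1) = |x| := by
          rw [hx, abs_mul, abs_of_pos hg]
          all_goals (push_cast; try ring)
      _ < 2 ^ (e + 1) := habs
      _ = 2 ^ P * 2 ^ (e - (P:ℤ) + 1) := two_zpow_split P e
  have : (|k| : ℝ) < 2 ^ P := lt_of_mul_lt_mul_right this hg.le
  exact_mod_cast this

lemma Mhi_decomp {P : ℕ} {emax e : ℤ} (h : e ≤ emax) :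
    Mhi P emax = (((2 ^ P - 1) * 2 ^ (emax - e).toNat : ℤ) : ℝ) * 2 ^ (e - (P:ℤ) + 1) := by
  push_cast
  rw [← zpow_natCast (2:ℝ) (emax - e).toNat, Int.toNat_of_nonneg (by omega),
    mul_assoc, ← zpow_add₀ two_ne_zero]
  unfold Mhi
  congr 2
  ring

lemma pos_case {P : ℕ} {emin emax : ℤ} (hP : 1 ≤ P) (he : emin ≤ emax)
    {a b : ℝ} (ha : a ∈ Vf P emin emax) (hb : b ∈ Vf P emin emax)
    (hexp : expo emin b ≤ expo emin a)
    (hover : Mhi P emax < a + b) :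
    Mhi P emax - a ∈ Vf P emin emax ∧ a + b - Mhi P emax ∈ Vf P emin emax := by
  have haM : |a| ≤ Mhi P emax := abs_le_Mhi ha
  have hbM : |b| ≤ Mhi P emax := abs_le_Mhi hb
  have hea_max : expo emin a ≤ emax := expo_le_emax hP he ha
  have heb_max : expo emin b ≤ emax := expo_le_emax hP he hb
  obtain ⟨ka, hka⟩ := exists_int_mul hP ha
  obtain ⟨kb, hkb⟩ := exists_int_mul hP hb
  have hblt : |b| < 2 ^ (expo emin b + 1) := abs_lt_two_pow emin b
  have hb2 : |b| < 2 ^ (expo emin a + 1) :=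
    hblt.trans_le (zpow_le_zpow_right₀ (by norm_num) (by omega))
  have haMle : a ≤ Mhi P emax := (le_abs_self a).trans haM
  constructor
  · refine mem_Vf_of ((2 ^ P - 1) * 2 ^ (emax - expo emin a).toNat - ka) ?_ ?_
      (emin_le_expo emin a) hea_max
    · conv_lhs => rw [hka, Mhi_decomp hea_max]
      push_cast
      ring
    · have h1 : 0 ≤ Mhi P emax - a := by linarith
      rw [abs_of_nonneg h1]
      linarith [le_abs_self b]
  · have hsplit : (2:ℝ) ^ (expo emin a - (P:ℤ) + 1)
        = 2 ^ (expo emin a - expo emin b).toNat * 2 ^ (expo emin b - (P:ℤ) + 1) := by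
      rw [← zpow_natCast (2:ℝ) (expo emin a - expo emin b).toNat,
        Int.toNat_of_nonneg (by omega), ← zpow_add₀ two_ne_zero]
      congr 1
      ring
    refine mem_Vf_of
      (ka * 2 ^ (expo emin a - expo emin b).toNat + kb
        - (2 ^ P - 1) * 2 ^ (emax - expo emin b).toNat)
      ?_ ?_ (emin_le_expo emin b) heb_max
    · conv_lhs => rw [hka, hkb, Mhi_decomp heb_max]
      rw [hsplit]
      push_cast
      ring
    · have h1 : 0 < a + b - Mhi P emax := by linarith
      rw [abs_of_pos h1]
      linarith [le_abs_self b, hblt]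

theorem saturated_sum_representable_parts
    (P : ℕ) (emin emax : ℤ) (hP : 1 ≤ P) (he : emin ≤ emax)
    (a b s : ℝ) (ha : a ∈ Vf P emin emax) (hb : b ∈ Vf P emin emax)
    (hexp : expo emin b ≤ expo emin a)
    (hover : Mhi P emax < |a + b|)
    (hs : s = Real.sign (a + b) * Mhi P emax) :
    s - a ∈ Vf P emin emax ∧ a + b - s ∈ Vf P emin emax := by
  have hM := Mhi_pos hP emax
  rcases lt_trichotomy (a + b) 0 with hneg | hzero | hpos
  · rw [Real.sign_of_neg hneg] at hs
    rw [abs_of_neg hneg] at hover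
    have h := pos_case hP he (Vf_neg ha) (Vf_neg hb)
      (by rw [expo_neg, expo_neg]; exact hexp) (by linarith)
    constructor
    · have heq : s - a = -(Mhi P emax - -a) := by rw [hs]; ring
      rw [heq]
      exact Vf_neg h.1
    · have heq : a + b - s = -(-a + -b - Mhi P emax) := by rw [hs]; ring
      rw [heq]
      exact Vf_neg h.2
  · rw [hzero] at hover
    simp at hover
    linarith
  · rw [Real.sign_of_pos hpos] at hs
    rw [abs_of_pos hpos] at hover
    have h := pos_case hP he ha hb hexp hover
    constructor
    · have heq : s - a = Mhi P emax - a := by rw [hs]; ring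
      rw [heq]; exact h.1
    · have heq : a + b - s = a + b - Mhi P emax := by rw [hs]; ring
      rw [heq]; exact h.2
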